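/- In a real normed space whose unit ball is strictly convex, for linearly independent vectors x, y, the functions h₊(t) := ‖x/‖x‖ + (y+t·x)/‖y+t·x‖‖ and h₋(t) := ‖x/‖x‖ − (y+t·x)/‖y+t·x‖‖ are strictly monotone (increasing, respectively decreasing) on ℝ. -/

import Mathlib

open Metric

/-- Strict triangle inequality for "independent" vectors, from strict convexity of the ball. -/
private lemma strict_tri_aux {X : Type*} [NormedAddCommGroup X] [NormedSpace ℝ X]
    (hsc : ∀ u v : X, ‖u‖ ≤ 1 → ‖v‖ ≤ 1 → u ≠ v → ∀ t : ℝ, 0 < t → t < 1 →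
      t • u + (1 - t) • v ∈ interior (Metric.closedBall (0 : X) 1))
    {a b : X} (hab : ∀ p q : ℝ, p • a + q • b = 0 → p = 0 ∧ q = 0) :
    ‖a + b‖ < ‖a‖ + ‖b‖ := by
  have ha : a ≠ 0 := by
    intro h0
    exact one_ne_zero (hab 1 0 (by simp [h0])).1
  have hb : b ≠ 0 := by
    intro h0
    exact one_ne_zero (hab 0 1 (by simp [h0])).2
  have hna : (0:ℝ) < ‖a‖ := norm_pos_iff.2 ha
  have hnb : (0:ℝ) < ‖b‖ := norm_pos_iff.2 hb
  set u : X := (‖a‖)⁻¹ • a with hu_def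
  set v : X := (‖b‖)⁻¹ • b with hv_def
  have hu1 : ‖u‖ = 1 := norm_smul_inv_norm ha
  have hv1 : ‖v‖ = 1 := norm_smul_inv_norm hb
  have huv : u ≠ v := by
    intro h0
    have h1 : (‖a‖)⁻¹ • a + (-(‖b‖)⁻¹) • b = 0 := by
      rw [neg_smul, ← hu_def, ← hv_def, h0]
      abel
    have := (hab _ _ h1).1
    exact (inv_ne_zero (ne_of_gt hna)) this
  set t : ℝ := ‖a‖ / (‖a‖ + ‖b‖) with ht_def
  have hab_pos : (0:ℝ) < ‖a‖ + ‖b‖ := by linarith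
  have ht0 : 0 < t := by positivity
  have ht1 : t < 1 := by
    rw [ht_def, div_lt_one hab_pos]; linarith
  have hmem := hsc u v (le_of_eq hu1) (le_of_eq hv1) huv t ht0 ht1
  rw [interior_closedBall (0:X) one_ne_zero, mem_ball_zero_iff] at hmem
  have hcomb : t • u + (1 - t) • v = (‖a‖ + ‖b‖)⁻¹ • (a + b) := by
    have h1t : 1 - t = ‖b‖ / (‖a‖ + ‖b‖) := by
      rw [ht_def]; field_simp; ring
    rw [hu_def, hv_def, smul_smul, smul_smul, h1t, smul_add, ht_def]
    congr 1
    · congr 1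
      field_simp
    · congr 1
      field_simp
  rw [hcomb, norm_smul, Real.norm_eq_abs, abs_of_pos (inv_pos.2 hab_pos)] at hmem
  calc ‖a + b‖ = (‖a‖ + ‖b‖) * ((‖a‖ + ‖b‖)⁻¹ * ‖a + b‖) := by
        field_simp
    _ < (‖a‖ + ‖b‖) * 1 := by
        exact mul_lt_mul_of_pos_left hmem hab_pos
    _ = ‖a‖ + ‖b‖ := mul_one _

theorem stmt_12 {X : Type*} [NormedAddCommGroup X] [NormedSpace ℝ X]
    (hsc : ∀ u v : X, ‖u‖ ≤ 1 → ‖v‖ ≤ 1 → u ≠ v → ∀ t : ℝ, 0 < t → t < 1 →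
      t • u + (1 - t) • v ∈ interior (Metric.closedBall (0 : X) 1))
    (x y : X) (h : LinearIndependent ℝ ![x, y]) :
    StrictMono (fun t : ℝ => ‖(‖x‖)⁻¹ • x + (‖y + t • x‖)⁻¹ • (y + t • x)‖) ∧
    StrictAnti (fun t : ℝ => ‖(‖x‖)⁻¹ • x - (‖y + t • x‖)⁻¹ • (y + t • x)‖) := by
  have hxy : ∀ a b : ℝ, a • x + b • y = 0 → a = 0 ∧ b = 0 :=
    fun a b hab => LinearIndependent.pair_iff.1 h a b hab
  have hx0 : x ≠ 0 := by
    intro h0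
    exact one_ne_zero (hxy 1 0 (by simp [h0])).1
  set m : ℝ := ‖x‖ with hm_def
  have hm : 0 < m := norm_pos_iff.2 hx0
  set z : ℝ → X := fun t => y + t • x with hz_def
  set f : ℝ → ℝ := fun t => ‖y + t • x‖ with hf_def
  have hfz : ∀ t, f t = ‖z t‖ := fun t => rfl
  have hz0 : ∀ t, z t ≠ 0 := by
    intro t h0
    have h1 : t • x + (1:ℝ) • y = 0 := by
      rw [one_smul, add_comm]; exact h0
    exact one_ne_zero (hxy t 1 h1).2
  have fpos : ∀ t, 0 < f t := fun t => norm_pos_iff.2 (hz0 t)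
  -- independence of z s with c • x
  have tri1 : ∀ s c : ℝ, c ≠ 0 → ∀ p q : ℝ, p • (z s) + q • (c • x) = 0 → p = 0 ∧ q = 0 := by
    intro s c hc p q hpq
    have h1 : (p * s + q * c) • x + p • y = 0 := by
      rw [← hpq]; simp only [hz_def]; module
    obtain ⟨h2, h3⟩ := hxy _ _ h1
    refine ⟨h3, ?_⟩
    have : q * c = 0 := by linear_combination h2 - s * h3
    exact (mul_eq_zero.1 this).resolve_right hc
  -- independence of c • z s with d • z t for s ≠ t
  have tri2 : ∀ s t c d : ℝ, s ≠ t → c ≠ 0 → d ≠ 0 →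
      ∀ p q : ℝ, p • (c • z s) + q • (d • z t) = 0 → p = 0 ∧ q = 0 := by
    intro s t c d hst hc hd p q hpq
    have h1 : (p * c * s + q * d * t) • x + (p * c + q * d) • y = 0 := by
      rw [← hpq]; simp only [hz_def]; module
    obtain ⟨h2, h3⟩ := hxy _ _ h1
    have h4 : q * d * (t - s) = 0 := by linear_combination h2 - s * h3
    have hq : q = 0 := by
      rcases mul_eq_zero.1 h4 with h5 | h5
      · exact (mul_eq_zero.1 h5).resolve_right hd
      · exact absurd (by linarith : s = t) hst
    refine ⟨?_, hq⟩
    rw [hq] at h3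
    simp at h3
    rcases h3 with h3 | h3
    · exact h3
    · exact absurd h3 hc
  -- strict Lipschitz-type bound
  have hlip : ∀ s t : ℝ, s < t → f t < f s + (t - s) * m ∧ f s < f t + (t - s) * m := by
    intro s t hst
    constructor
    · have he : z t = z s + (t - s) • x := by simp only [hz_def]; module
      have := strict_tri_aux hsc (tri1 s (t - s) (by linarith))
      rw [← he] at this
      calc f t = ‖z t‖ := hfz t
        _ < ‖z s‖ + ‖(t - s) • x‖ := this
        _ = f s + (t - s) * m := by
            rw [norm_smul, Real.norm_eq_abs, abs_of_pos (by linarith : (0:ℝ) < t - s)]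
    · have he : z s = z t + (s - t) • x := by simp only [hz_def]; module
      have := strict_tri_aux hsc (tri1 t (s - t) (by intro h0; linarith [sub_eq_zero.1 h0]))
      rw [← he] at this
      calc f s = ‖z s‖ := hfz s
        _ < ‖z t‖ + ‖(s - t) • x‖ := this
        _ = f t + (t - s) * m := by
            rw [norm_smul, Real.norm_eq_abs, abs_of_neg (by linarith : s - t < 0)]
            have : -(s - t) = t - s := by ring
            rw [this]
  -- strict convexity of f
  have sconv : StrictConvexOn ℝ Set.univ f := by
    refine ⟨convex_univ, fun a _ b _ hab p q hp hq hpq => ?_⟩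
    have hkey : y + (p • a + q • b) • x = p • z a + q • z b := by
      have h1 : p • z a + q • z b = (p + q) • y + (p * a + q * b) • x := by
        simp only [hz_def]; module
      rw [h1, hpq, one_smul, smul_eq_mul, smul_eq_mul]
    have h2 : f (p • a + q • b) = ‖p • z a + q • z b‖ := by
      rw [hf_def]; simp only [← hkey]
    calc f (p • a + q • b) = ‖p • z a + q • z b‖ := h2
      _ < ‖p • z a‖ + ‖q • z b‖ :=
          strict_tri_aux hsc (tri2 a b p q hab (ne_of_gt hp) (ne_of_gt hq))
      _ = p * f a + q * f b := by
          rw [norm_smul, norm_smul, Real.norm_eq_abs, Real.norm_eq_abs,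
            abs_of_pos hp, abs_of_pos hq]
  -- the shifted arguments
  set σ : ℝ → ℝ := fun t => t + f t / m with hσ_def
  set τ : ℝ → ℝ := fun t => t - f t / m with hτ_def
  have hσgt : ∀ t, t < σ t := by
    intro t
    have : 0 < f t / m := div_pos (fpos t) hm
    simp only [hσ_def]; linarith
  have hτlt : ∀ t, τ t < t := by
    intro t
    have : 0 < f t / m := div_pos (fpos t) hm
    simp only [hτ_def]; linarith
  have hσmono : ∀ s t : ℝ, s < t → σ s < σ t := by
    intro s t hst
    have h1 := (hlip s t hst).2
    have h2 : f s / m < f t / m + (t - s) := by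
      rw [div_lt_iff₀ hm]
      calc f s < f t + (t - s) * m := h1
        _ = (f t / m + (t - s)) * m := by field_simp
    simp only [hσ_def]; linarith
  have hτmono : ∀ s t : ℝ, s < t → τ s < τ t := by
    intro s t hst
    have h1 := (hlip s t hst).1
    have h2 : f t / m < f s / m + (t - s) := by
      rw [div_lt_iff₀ hm]
      calc f t < f s + (t - s) * m := h1
        _ = (f s / m + (t - s)) * m := by field_simp
    simp only [hτ_def]; linarith
  -- formulas for the two functions
  have hplus : ∀ t : ℝ, ‖(‖x‖)⁻¹ • x + (‖y + t • x‖)⁻¹ • (y + t • x)‖ = f (σ t) / f t := by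
    intro t
    have hft : f t ≠ 0 := ne_of_gt (fpos t)
    have hm' : m ≠ 0 := ne_of_gt hm
    have he : (‖x‖)⁻¹ • x + (‖y + t • x‖)⁻¹ • (y + t • x) = (f t)⁻¹ • (z (σ t)) := by
      show (m)⁻¹ • x + (f t)⁻¹ • (y + t • x) = (f t)⁻¹ • (y + (t + f t / m) • x)
      match_scalars
      · field_simp
        ring
      · ring
    rw [he, norm_smul, Real.norm_eq_abs, abs_of_pos (inv_pos.2 (fpos t)), ← hfz (σ t),
      inv_mul_eq_div]
  have hminus : ∀ t : ℝ, ‖(‖x‖)⁻¹ • x - (‖y + t • x‖)⁻¹ • (y + t • x)‖ = f (τ t) / f t := by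
    intro t
    have hft : f t ≠ 0 := ne_of_gt (fpos t)
    have hm' : m ≠ 0 := ne_of_gt hm
    have he : (‖x‖)⁻¹ • x - (‖y + t • x‖)⁻¹ • (y + t • x) = -((f t)⁻¹ • (z (τ t))) := by
      show (m)⁻¹ • x - (f t)⁻¹ • (y + t • x) = -((f t)⁻¹ • (y + (t - f t / m) • x))
      match_scalars
      · field_simp
        ring
      · ring
    rw [he, norm_neg, norm_smul, Real.norm_eq_abs, abs_of_pos (inv_pos.2 (fpos t)), ← hfz (τ t),
      inv_mul_eq_div]
  -- slope formulas
  have hform1 : ∀ t : ℝ, f (σ t) / f t = 1 + (f (σ t) - f t) / (σ t - t) / m := by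
    intro t
    have hft : f t ≠ 0 := ne_of_gt (fpos t)
    have hm' : m ≠ 0 := ne_of_gt hm
    have hd : σ t - t = f t / m := by simp only [hσ_def]; ring
    rw [hd]
    field_simp
    ring
  have hform2 : ∀ t : ℝ, f (τ t) / f t = 1 - (f t - f (τ t)) / (t - τ t) / m := by
    intro t
    have hft : f t ≠ 0 := ne_of_gt (fpos t)
    have hm' : m ≠ 0 := ne_of_gt hm
    have hd : t - τ t = f t / m := by simp only [hτ_def]; ring
    rw [hd]
    field_simp
    ring
  have hswap : ∀ a b : ℝ, (f a - f b) / (a - b) = (f b - f a) / (b - a) := by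
    intro a b
    rw [← neg_sub (f b), ← neg_sub b, neg_div_neg_eq]
  constructor
  · intro s t hst
    simp only
    rw [hplus s, hplus t, hform1 s, hform1 t]
    have hA : (f (σ s) - f s) / (σ s - s) < (f (σ t) - f s) / (σ t - s) :=
      sconv.secant_strict_mono (Set.mem_univ s) (Set.mem_univ (σ s)) (Set.mem_univ (σ t))
        (ne_of_gt (hσgt s)) (ne_of_gt ((hσgt s).trans (hσmono s t hst)))
        (hσmono s t hst)
    have hB : (f s - f (σ t)) / (s - σ t) < (f t - f (σ t)) / (t - σ t) :=
      sconv.secant_strict_mono (Set.mem_univ (σ t)) (Set.mem_univ s) (Set.mem_univ t)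
        (ne_of_lt (hst.trans (hσgt t))) (ne_of_lt (hσgt t)) hst
    rw [hswap s (σ t), hswap t (σ t)] at hB
    have hAB : (f (σ s) - f s) / (σ s - s) < (f (σ t) - f t) / (σ t - t) := hA.trans hB
    gcongr
  · intro s t hst
    simp only
    rw [hminus s, hminus t, hform2 s, hform2 t]
    have hA : (f s - f (τ s)) / (s - τ s) < (f t - f (τ s)) / (t - τ s) :=
      sconv.secant_strict_mono (Set.mem_univ (τ s)) (Set.mem_univ s) (Set.mem_univ t)
        (ne_of_gt (hτlt s)) (ne_of_gt ((hτlt s).trans hst)) hst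
    have hB : (f (τ s) - f t) / (τ s - t) < (f (τ t) - f t) / (τ t - t) :=
      sconv.secant_strict_mono (Set.mem_univ t) (Set.mem_univ (τ s)) (Set.mem_univ (τ t))
        (ne_of_lt ((hτmono s t hst).trans (hτlt t))) (ne_of_lt (hτlt t))
        (hτmono s t hst)
    rw [hswap (τ s) t, hswap (τ t) t] at hB
    have hAB : (f s - f (τ s)) / (s - τ s) < (f t - f (τ t)) / (t - τ t) := hA.trans hB
    gcongr
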